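/- Let X and Y be independent rate-1 exponential random variables, let α ≥ 2, r₁, r₂ ∈ (0,1] and ε > 0, and let δ₁, δ₂ : ℝ → ℝ satisfy δ_i(ρ) ≥ ρ^{−r_i+ε} for all sufficiently large ρ (i = 1,2). Define U(ρ) = P[1 + ρX < ρ^{r₁}] + ρ^{r₁}·Q(√(ρ^{r₁} δ₁(ρ)/2)) + P[ρ^α Y < (ρ^{r₂} − 1)(1 + ρX)] + ρ^{r₁+r₂}·Q(√(ρ^{r₂} δ₂(ρ)/2)). Then limsup_{ρ→∞} log U(ρ)/log ρ ≤ −min{1 − r₁, α − 1 − r₂}. (This is the stripping-decoder bound P(E_11) ⩽̇ P(O_11) + P(O_21) ≐ SNR^{−min{(1−r₁)^+,(α−1−r₂)^+}} of Theorem 1, for codebooks of sizes SNR^{r₁}, SNR^{r₂} whose minimum squared distances satisfy |Δx_i|² ⩾̇ SNR^{−r_i+ε}.) -/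

import Mathlib

open MeasureTheory ProbabilityTheory Filter Real

noncomputable def gaussQ (t : ℝ) : ℝ := ((gaussianReal 0 1) (Set.Ici t)).toReal

lemma gaussQ_nonneg (t : ℝ) : 0 ≤ gaussQ t := ENNReal.toReal_nonneg

lemma gaussQ_anti {t s : ℝ} (h : t ≤ s) : gaussQ s ≤ gaussQ t :=
  ENNReal.toReal_mono (measure_ne_top _ _) (measure_mono (Set.Ici_subset_Ici.2 h))

lemma gaussQ_le_exp (t : ℝ) : gaussQ t ≤ Real.exp (1/2 - t) := by
  have h1 : (gaussianReal 0 1) (Set.Ici t) = ∫⁻ x in Set.Ici t, gaussianPDF 0 1 x :=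
    gaussianReal_apply 0 one_ne_zero _
  have h2 : ∫⁻ x in Set.Ici t, gaussianPDF 0 1 x
      ≤ ∫⁻ x in Set.Ici t, ENNReal.ofReal (Real.exp (1/2) * Real.exp (-x)) := by
    refine lintegral_mono fun x => ?_
    rw [gaussianPDF, gaussianPDFReal]
    refine ENNReal.ofReal_le_ofReal ?_
    simp only [NNReal.coe_one, mul_one, sub_zero]
    have hπ : (1:ℝ) ≤ Real.sqrt (2 * π) := by
      rw [show (1:ℝ) = Real.sqrt 1 by simp]
      exact Real.sqrt_le_sqrt (by nlinarith [Real.pi_gt_three])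
    have h3 : Real.exp (-x^2 / 2) ≤ Real.exp (1/2) * Real.exp (-x) := by
      rw [← Real.exp_add]
      refine Real.exp_le_exp.2 (by nlinarith [sq_nonneg (x - 1)])
    calc (√(2 * π))⁻¹ * rexp (-x^2 / 2)
        ≤ 1 * rexp (-x^2 / 2) := by
          have := Real.exp_pos (-x^2/2)
          nlinarith [inv_le_one_of_one_le₀ hπ, inv_nonneg.2 (Real.sqrt_nonneg (2*π))]
      _ ≤ Real.exp (1/2) * Real.exp (-x) := by rw [one_mul]; exact h3
  have h4 : ∫⁻ x in Set.Ici t, ENNReal.ofReal (Real.exp (1/2) * Real.exp (-x))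
      = ENNReal.ofReal (Real.exp (1/2) * Real.exp (-t)) := by
    rw [← setLIntegral_congr (Ioi_ae_eq_Ici (a := t))]
    rw [← ofReal_integral_eq_lintegral_ofReal]
    · rw [MeasureTheory.integral_const_mul, integral_exp_neg_Ioi]
    · exact (Integrable.const_mul (by simpa [IntegrableOn] using exp_neg_integrableOn_Ioi t one_pos) _)
    · exact Filter.Eventually.of_forall fun x => by positivity
  have h5 : gaussQ t ≤ Real.exp (1/2) * Real.exp (-t) := by
    rw [gaussQ, h1]
    calc (∫⁻ x in Set.Ici t, gaussianPDF 0 1 x).toReal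
        ≤ (ENNReal.ofReal (Real.exp (1/2) * Real.exp (-t))).toReal :=
          ENNReal.toReal_mono ENNReal.ofReal_ne_top (h4 ▸ h2)
      _ = _ := ENNReal.toReal_ofReal (by positivity)
  calc gaussQ t ≤ Real.exp (1/2) * Real.exp (-t) := h5
    _ = Real.exp (1/2 - t) := by rw [Real.exp_sub, Real.exp_neg]; ring

lemma expMeasure_Iic_toReal {x : ℝ} (hx : 0 ≤ x) :
    ((expMeasure 1) (Set.Iic x)).toReal = 1 - Real.exp (-x) := by
  haveI : IsProbabilityMeasure (expMeasure 1) := isProbabilityMeasure_expMeasure one_pos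
  have h := cdf_expMeasure_eq one_pos x
  rw [cdf_eq_real, measureReal_def] at h
  rw [h, if_pos hx, one_mul]

lemma expMeasure_Ioi_toReal {x : ℝ} (hx : 0 ≤ x) :
    ((expMeasure 1) (Set.Ioi x)).toReal = Real.exp (-x) := by
  haveI : IsProbabilityMeasure (expMeasure 1) := isProbabilityMeasure_expMeasure one_pos
  have hc : (expMeasure 1) (Set.Ioi x) = 1 - (expMeasure 1) (Set.Iic x) := by
    rw [← Set.compl_Iic, measure_compl measurableSet_Iic (measure_ne_top _ _), measure_univ]
  rw [hc, ENNReal.toReal_sub_of_le prob_le_one ENNReal.one_ne_top, ENNReal.toReal_one,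
    expMeasure_Iic_toReal hx]
  ring

lemma one_sub_exp_neg_le {c : ℝ} : 1 - Real.exp (-c) ≤ c := by
  nlinarith [Real.add_one_le_exp (-c)]

lemma half_le_one_sub_exp_neg {c : ℝ} (h0 : 0 ≤ c) (h1 : c ≤ 1) :
    c / 2 ≤ 1 - Real.exp (-c) := by
  have hE1 : (Real.exp c)⁻¹ * Real.exp c = 1 := inv_mul_cancel₀ (Real.exp_pos c).ne'
  rw [Real.exp_neg]
  nlinarith [Real.add_one_le_exp c, inv_pos.2 (Real.exp_pos c), Real.exp_pos c,
    mul_nonneg h0 (sub_nonneg.2 h1)]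

set_option maxHeartbeats 1000000 in
/-- The stripping-decoder bound of Theorem 1:
`P(E_11) ⩽̇ P(O_11) + P(O_21) ≐ SNR^{−min{(1−r₁)^+, (α−1−r₂)^+}}`, for codebooks of
sizes `SNR^{r₁}, SNR^{r₂}` whose minimum squared distances satisfy
`δᵢ(ρ) ≥ ρ^{−rᵢ+ε}` eventually. -/
theorem stmt_6 {Ω : Type*} [MeasurableSpace Ω] (P : Measure Ω) [IsProbabilityMeasure P]
    (X Y : Ω → ℝ) (hXm : Measurable X) (hYm : Measurable Y)
    (hX : Measure.map X P = expMeasure 1) (hY : Measure.map Y P = expMeasure 1)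
    (hindep : IndepFun X Y P)
    (α r₁ r₂ ε : ℝ) (hα : 2 ≤ α)
    (hr₁0 : 0 < r₁) (hr₁1 : r₁ ≤ 1) (hr₂0 : 0 < r₂) (hr₂1 : r₂ ≤ 1) (hε : 0 < ε)
    (δ₁ δ₂ : ℝ → ℝ)
    (hδ₁ : ∀ᶠ ρ in atTop, (ρ : ℝ) ^ (-r₁ + ε) ≤ δ₁ ρ)
    (hδ₂ : ∀ᶠ ρ in atTop, (ρ : ℝ) ^ (-r₂ + ε) ≤ δ₂ ρ)
    (U : ℝ → ℝ)
    (hU : ∀ ρ : ℝ, U ρ =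
      (P {ω | 1 + ρ * X ω < ρ ^ r₁}).toReal
        + ρ ^ r₁ * gaussQ (Real.sqrt (ρ ^ r₁ * δ₁ ρ / 2))
        + (P {ω | ρ ^ α * Y ω < (ρ ^ r₂ - 1) * (1 + ρ * X ω)}).toReal
        + ρ ^ (r₁ + r₂) * gaussQ (Real.sqrt (ρ ^ r₂ * δ₂ ρ / 2))) :
    Filter.limsup (fun ρ : ℝ => Real.log (U ρ) / Real.log ρ) atTop
      ≤ -min (1 - r₁) (α - 1 - r₂) := by
  haveI hPexp : IsProbabilityMeasure (expMeasure 1) := isProbabilityMeasure_expMeasure one_pos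
  set m := min (1 - r₁) (α - 1 - r₂) with hm
  have hm1 : m ≤ 1 - r₁ := min_le_left _ _
  have hm2 : m ≤ α - 1 - r₂ := min_le_right _ _
  have hm0 : 0 ≤ m := le_min (by linarith) (by linarith)
  -- eventual lower bound on U
  have hlow : ∀ᶠ ρ in atTop, ρ ^ (r₁ - 1) / 8 ≤ U ρ := by
    filter_upwards [eventually_ge_atTop (8:ℝ),
      (tendsto_rpow_atTop hr₁0).eventually_ge_atTop (2:ℝ)] with ρ hρ8 hρr
    have ρ0 : (0:ℝ) < ρ := by linarith
    have hρ1 : (1:ℝ) ≤ ρ := by linarith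
    set c : ℝ := (ρ ^ r₁ - 1) / ρ with hc
    have hρc : ρ * c = ρ ^ r₁ - 1 := by rw [hc, mul_div_assoc', mul_div_cancel_left₀ _ ρ0.ne']
    have hcs : ρ ^ (r₁ - 1) = ρ ^ r₁ / ρ := by
      rw [Real.rpow_sub ρ0, Real.rpow_one]
    have hc0 : 0 ≤ c := by
      apply div_nonneg _ ρ0.le; linarith
    have hc1 : c ≤ 1 := by
      rw [hc, div_le_one ρ0]
      have : ρ ^ r₁ ≤ ρ := by
        calc ρ ^ r₁ ≤ ρ ^ (1:ℝ) := Real.rpow_le_rpow_of_exponent_le hρ1 hr₁1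
          _ = ρ := Real.rpow_one ρ
      linarith
    have hlowc : ρ ^ (r₁ - 1) / 2 ≤ c := by
      rw [hcs, hc, div_div, div_le_div_iff₀ (by positivity) ρ0]
      nlinarith
    -- the event contains X ≤ c/2
    have hsub : X ⁻¹' (Set.Iic (c/2)) ⊆ {ω | 1 + ρ * X ω < ρ ^ r₁} := by
      intro ω hω
      simp only [Set.mem_preimage, Set.mem_Iic] at hω
      simp only [Set.mem_setOf_eq]
      nlinarith [mul_le_mul_of_nonneg_left hω ρ0.le]
    have hmeas : (expMeasure 1 (Set.Iic (c/2))).toReal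
        ≤ (P {ω | 1 + ρ * X ω < ρ ^ r₁}).toReal := by
      rw [← hX, Measure.map_apply hXm measurableSet_Iic]
      exact ENNReal.toReal_mono (measure_ne_top _ _) (measure_mono hsub)
    have h1 : c / 4 ≤ (expMeasure 1 (Set.Iic (c/2))).toReal := by
      rw [expMeasure_Iic_toReal (by linarith)]
      have := half_le_one_sub_exp_neg (c := c/2) (by linarith) (by linarith)
      linarith
    have hterms : (P {ω | 1 + ρ * X ω < ρ ^ r₁}).toReal ≤ U ρ := by
      rw [hU ρ]
      have n2 : 0 ≤ ρ ^ r₁ * gaussQ (Real.sqrt (ρ ^ r₁ * δ₁ ρ / 2)) :=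
        mul_nonneg (Real.rpow_nonneg ρ0.le _) (gaussQ_nonneg _)
      have n3 : 0 ≤ (P {ω | ρ ^ α * Y ω < (ρ ^ r₂ - 1) * (1 + ρ * X ω)}).toReal :=
        ENNReal.toReal_nonneg
      have n4 : 0 ≤ ρ ^ (r₁ + r₂) * gaussQ (Real.sqrt (ρ ^ r₂ * δ₂ ρ / 2)) :=
        mul_nonneg (Real.rpow_nonneg ρ0.le _) (gaussQ_nonneg _)
      linarith
    linarith
  have hlogpos : ∀ ρ : ℝ, (8:ℝ) ≤ ρ → 0 < Real.log ρ := fun ρ h =>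
    Real.log_pos (by linarith)
  -- coboundedness
  have hcb : IsCoboundedUnder (· ≤ ·) atTop (fun ρ : ℝ => Real.log (U ρ) / Real.log ρ) := by
    apply Filter.isCoboundedUnder_le_of_eventually_le atTop (x := r₁ - 2)
    filter_upwards [hlow, eventually_ge_atTop (8:ℝ)] with ρ hUl hρ8
    have ρ0 : (0:ℝ) < ρ := by linarith
    have hlp := hlogpos ρ hρ8
    have hUp : 0 < U ρ := lt_of_lt_of_le (by positivity) hUl
    rw [le_div_iff₀ hlp]
    have hlog8 : Real.log 8 ≤ Real.log ρ := by
      apply Real.log_le_log (by norm_num) hρ8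
    have h1 : Real.log (ρ ^ (r₁ - 1) / 8) ≤ Real.log (U ρ) :=
      Real.log_le_log (by positivity) hUl
    rw [Real.log_div (by positivity) (by norm_num), Real.log_rpow ρ0] at h1
    nlinarith [hlp]
  -- main upper bound
  refine le_of_forall_pos_le_add fun η hη => ?_
  refine Filter.limsup_le_of_le hcb ?_
  have hε2 : (0:ℝ) < ε / 2 := by linarith
  have hη2 : (0:ℝ) < η / 2 := by linarith
  filter_upwards [hlow, hδ₁, hδ₂, eventually_ge_atTop (8:ℝ),
    ((isLittleO_log_rpow_atTop hε2).def (by norm_num : (0:ℝ) < 1/16)),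
    (tendsto_rpow_atTop hε2).eventually_ge_atTop (8:ℝ),
    ((isLittleO_log_rpow_atTop hη2).def (by norm_num : (0:ℝ) < 1/16)),
    (tendsto_rpow_atTop hη2).eventually_ge_atTop (8:ℝ)]
    with ρ hUl hd₁ hd₂ hρ8 hLε hBε hLη hBη
  have ρ0 : (0:ℝ) < ρ := by linarith
  have hρ1 : (1:ℝ) ≤ ρ := by linarith
  have hlp := hlogpos ρ hρ8
  have hlognn : 0 ≤ Real.log ρ := hlp.le
  have hLε' : Real.log ρ ≤ (1/16) * ρ ^ (ε/2) := by
    have := hLε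
    rwa [Real.norm_eq_abs, Real.norm_eq_abs, abs_of_nonneg hlognn,
      abs_of_nonneg (Real.rpow_nonneg ρ0.le _)] at this
  have hLη' : Real.log ρ ≤ (1/16) * ρ ^ (η/2) := by
    have := hLη
    rwa [Real.norm_eq_abs, Real.norm_eq_abs, abs_of_nonneg hlognn,
      abs_of_nonneg (Real.rpow_nonneg ρ0.le _)] at this
  -- generic exp-tail estimate for the gaussQ terms
  have hsqrt : ∀ e : ℝ, Real.sqrt (ρ ^ e) = ρ ^ (e/2) := by
    intro e
    rw [Real.sqrt_eq_rpow, ← Real.rpow_mul ρ0.le]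
    ring_nf
  have hsqrt2 : ρ ^ (ε/2) / 2 ≤ Real.sqrt (ρ ^ ε / 2) := by
    rw [Real.sqrt_div (Real.rpow_nonneg ρ0.le _), hsqrt]
    have h2 : Real.sqrt 2 ≤ 2 := by
      nlinarith [Real.sq_sqrt (by norm_num : (0:ℝ) ≤ 2), Real.sqrt_nonneg 2]
    apply div_le_div_of_nonneg_left (Real.rpow_nonneg ρ0.le _) (Real.sqrt_pos.2 two_pos) h2
  have hqbound : ∀ b t : ℝ, 0 ≤ b → b ≤ 3 → Real.sqrt (ρ ^ ε / 2) ≤ t →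
      ρ ^ b * gaussQ t ≤ ρ ^ (-1 : ℝ) := by
    intro b t hb0 hb3 hts
    have ht : ρ ^ (ε/2)/2 ≤ t := le_trans hsqrt2 hts
    calc ρ ^ b * gaussQ t ≤ ρ ^ b * Real.exp (1/2 - t) := by
          exact mul_le_mul_of_nonneg_left (gaussQ_le_exp t) (Real.rpow_nonneg ρ0.le _)
      _ ≤ ρ ^ (-1 : ℝ) := by
          rw [Real.rpow_def_of_pos ρ0, Real.rpow_def_of_pos ρ0, ← Real.exp_add]
          apply Real.exp_le_exp.2
          have hblog : Real.log ρ * b ≤ 3 * Real.log ρ := by nlinarith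
          linarith [ht, hLε', hBε]
  have hmono : ∀ e₁ e₂ : ℝ, e₁ ≤ e₂ → ρ ^ e₁ ≤ ρ ^ e₂ := fun _ _ h =>
    Real.rpow_le_rpow_of_exponent_le hρ1 h
  -- term 1
  have hterm1 : (P {ω | 1 + ρ * X ω < ρ ^ r₁}).toReal ≤ ρ ^ (-m) := by
    set c : ℝ := (ρ ^ r₁ - 1) / ρ with hc
    have hρr1 : (1:ℝ) ≤ ρ ^ r₁ := Real.one_le_rpow hρ1 hr₁0.le
    have hc0 : 0 ≤ c := div_nonneg (by linarith) ρ0.le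
    have hsub : {ω | 1 + ρ * X ω < ρ ^ r₁} ⊆ X ⁻¹' (Set.Iic c) := by
      intro ω hω
      simp only [Set.mem_setOf_eq] at hω
      simp only [Set.mem_preimage, Set.mem_Iic, hc, le_div_iff₀ ρ0]
      nlinarith
    have h1 : (P {ω | 1 + ρ * X ω < ρ ^ r₁}).toReal ≤ (expMeasure 1 (Set.Iic c)).toReal := by
      rw [← hX, Measure.map_apply hXm measurableSet_Iic]
      exact ENNReal.toReal_mono (measure_ne_top _ _) (measure_mono hsub)
    have h2 : (expMeasure 1 (Set.Iic c)).toReal ≤ c := by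
      rw [expMeasure_Iic_toReal hc0]; exact one_sub_exp_neg_le
    have h3 : c ≤ ρ ^ (r₁ - 1) := by
      rw [hc, Real.rpow_sub ρ0, Real.rpow_one, div_le_div_iff₀ ρ0 ρ0]
      nlinarith
    calc (P {ω | 1 + ρ * X ω < ρ ^ r₁}).toReal ≤ c := le_trans h1 h2
      _ ≤ ρ ^ (r₁ - 1) := h3
      _ ≤ ρ ^ (-m) := hmono _ _ (by linarith)
  -- term 2
  have hterm2 : ρ ^ r₁ * gaussQ (Real.sqrt (ρ ^ r₁ * δ₁ ρ / 2)) ≤ ρ ^ (-m) := by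
    have harg : Real.sqrt (ρ ^ ε / 2) ≤ Real.sqrt (ρ ^ r₁ * δ₁ ρ / 2) := by
      apply Real.sqrt_le_sqrt
      have : ρ ^ r₁ * ρ ^ (-r₁ + ε) ≤ ρ ^ r₁ * δ₁ ρ :=
        mul_le_mul_of_nonneg_left hd₁ (Real.rpow_nonneg ρ0.le _)
      rw [← Real.rpow_add ρ0, show r₁ + (-r₁ + ε) = ε by ring] at this
      linarith
    calc ρ ^ r₁ * gaussQ (Real.sqrt (ρ ^ r₁ * δ₁ ρ / 2))
        ≤ ρ ^ r₁ * gaussQ (Real.sqrt (ρ ^ ε / 2)) :=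
          mul_le_mul_of_nonneg_left (gaussQ_anti harg) (Real.rpow_nonneg ρ0.le _)
      _ ≤ ρ ^ (-1:ℝ) := hqbound r₁ _ hr₁0.le (by linarith) le_rfl
      _ ≤ ρ ^ (-m) := hmono _ _ (by linarith)
  -- term 4
  have hterm4 : ρ ^ (r₁ + r₂) * gaussQ (Real.sqrt (ρ ^ r₂ * δ₂ ρ / 2)) ≤ ρ ^ (-m) := by
    have harg : Real.sqrt (ρ ^ ε / 2) ≤ Real.sqrt (ρ ^ r₂ * δ₂ ρ / 2) := by
      apply Real.sqrt_le_sqrt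
      have : ρ ^ r₂ * ρ ^ (-r₂ + ε) ≤ ρ ^ r₂ * δ₂ ρ :=
        mul_le_mul_of_nonneg_left hd₂ (Real.rpow_nonneg ρ0.le _)
      rw [← Real.rpow_add ρ0, show r₂ + (-r₂ + ε) = ε by ring] at this
      linarith
    calc ρ ^ (r₁ + r₂) * gaussQ (Real.sqrt (ρ ^ r₂ * δ₂ ρ / 2))
        ≤ ρ ^ (r₁ + r₂) * gaussQ (Real.sqrt (ρ ^ ε / 2)) :=
          mul_le_mul_of_nonneg_left (gaussQ_anti harg) (Real.rpow_nonneg ρ0.le _)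
      _ ≤ ρ ^ (-1:ℝ) := hqbound (r₁ + r₂) _ (by linarith) (by linarith) le_rfl
      _ ≤ ρ ^ (-m) := hmono _ _ (by linarith)
  -- term 3
  have hterm3 : (P {ω | ρ ^ α * Y ω < (ρ ^ r₂ - 1) * (1 + ρ * X ω)}).toReal
      ≤ ρ ^ (-m) + ρ ^ (-m + η/2) := by
    set T : ℝ := 2 * Real.log ρ with hT
    set c₂ : ℝ := ρ ^ r₂ - 1 with hc₂
    have hρr2 : (1:ℝ) ≤ ρ ^ r₂ := Real.one_le_rpow hρ1 hr₂0.le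
    have hc₂0 : 0 ≤ c₂ := by simp only [hc₂]; linarith
    have hT0 : 0 ≤ T := by positivity
    have hρα : (0:ℝ) < ρ ^ α := Real.rpow_pos_of_pos ρ0 α
    set s : ℝ := c₂ * (1 + ρ * T) / ρ ^ α with hs
    have hs0 : 0 ≤ s := by
      apply div_nonneg _ hρα.le
      have : 0 ≤ 1 + ρ * T := by positivity
      positivity
    have hsub : {ω | ρ ^ α * Y ω < (ρ ^ r₂ - 1) * (1 + ρ * X ω)}
        ⊆ X ⁻¹' (Set.Ioi T) ∪ Y ⁻¹' (Set.Iic s) := by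
      intro ω hω
      simp only [Set.mem_setOf_eq] at hω
      by_cases hxT : X ω ≤ T
      · right
        simp only [Set.mem_preimage, Set.mem_Iic, hs, le_div_iff₀ hρα]
        rw [hc₂] at hc₂0 ⊢
        nlinarith [mul_nonneg (mul_nonneg hc₂0 ρ0.le) (sub_nonneg.2 hxT)]
      · left
        simp only [Set.mem_preimage, Set.mem_Ioi]
        exact lt_of_not_ge hxT
    have h1 : (P {ω | ρ ^ α * Y ω < (ρ ^ r₂ - 1) * (1 + ρ * X ω)}).toReal
        ≤ (P (X ⁻¹' (Set.Ioi T))).toReal + (P (Y ⁻¹' (Set.Iic s))).toReal := by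
      rw [← ENNReal.toReal_add (measure_ne_top _ _) (measure_ne_top _ _)]
      exact ENNReal.toReal_mono
        (ENNReal.add_ne_top.2 ⟨measure_ne_top _ _, measure_ne_top _ _⟩)
        ((measure_mono hsub).trans (measure_union_le _ _))
    have h2 : (P (X ⁻¹' (Set.Ioi T))).toReal = Real.exp (-T) := by
      rw [← Measure.map_apply hXm measurableSet_Ioi, hX, expMeasure_Ioi_toReal hT0]
    have h3 : (P (Y ⁻¹' (Set.Iic s))).toReal ≤ s := by
      rw [← Measure.map_apply hYm measurableSet_Iic, hY, expMeasure_Iic_toReal hs0]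
      exact one_sub_exp_neg_le
    have h4 : Real.exp (-T) ≤ ρ ^ (-m) := by
      have : Real.exp (-T) = ρ ^ (-2 : ℝ) := by
        rw [Real.rpow_def_of_pos ρ0, hT]; ring_nf
      rw [this]
      exact hmono _ _ (by linarith)
    have h5 : s ≤ ρ ^ (-m + η/2) := by
      have hstep : 1 + ρ * T ≤ ρ ^ (1 + η/2) := by
        rw [Real.rpow_add ρ0, Real.rpow_one, hT]
        nlinarith [mul_le_mul_of_nonneg_left hLη' (by positivity : (0:ℝ) ≤ 2 * ρ),
          mul_le_mul_of_nonneg_left hBη ρ0.le]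
      have hsle : s ≤ ρ ^ r₂ * ρ ^ (1 + η/2) / ρ ^ α := by
        rw [hs]
        apply (div_le_div_iff_of_pos_right hρα).2
        apply mul_le_mul (by simp only [hc₂]; linarith) hstep (by positivity)
          (Real.rpow_nonneg ρ0.le _)
      calc s ≤ ρ ^ r₂ * ρ ^ (1 + η/2) / ρ ^ α := hsle
        _ = ρ ^ (r₂ + (1 + η/2) - α) := by
            rw [← Real.rpow_add ρ0, ← Real.rpow_sub ρ0]
        _ ≤ ρ ^ (-m + η/2) := hmono _ _ (by linarith)
    calc (P {ω | ρ ^ α * Y ω < (ρ ^ r₂ - 1) * (1 + ρ * X ω)}).toReal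
        ≤ (P (X ⁻¹' (Set.Ioi T))).toReal + (P (Y ⁻¹' (Set.Iic s))).toReal := h1
      _ ≤ ρ ^ (-m) + ρ ^ (-m + η/2) := by rw [h2]; exact add_le_add h4 (h3.trans h5)
  -- combine
  have hUle : U ρ ≤ ρ ^ (-m + η) := by
    have hxx : ρ ^ (-m) ≤ ρ ^ (-m + η/2) := hmono _ _ (by linarith)
    have hcomb : U ρ ≤ 5 * ρ ^ (-m + η/2) := by
      rw [hU ρ]; linarith
    have : 5 * ρ ^ (-m + η/2) ≤ ρ ^ (-m + η) := by
      have : ρ ^ (-m + η) = ρ ^ (-m + η/2) * ρ ^ (η/2) := by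
        rw [← Real.rpow_add ρ0]; ring_nf
      rw [this]
      have := mul_le_mul_of_nonneg_left hBη (Real.rpow_nonneg ρ0.le (-m + η/2))
      nlinarith [Real.rpow_nonneg ρ0.le (-m + η/2)]
    linarith
  have hUp : 0 < U ρ := lt_of_lt_of_le (by positivity) hUl
  rw [div_le_iff₀ hlp]
  calc Real.log (U ρ) ≤ Real.log (ρ ^ (-m + η)) := Real.log_le_log hUp hUle
    _ = (-m + η) * Real.log ρ := Real.log_rpow ρ0 _
    _ = (-m + η) * Real.log ρ := rfl
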